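/- Let D be an N×N matrix over ZMod 2, V an invertible upper-triangular N×N matrix over ZMod 2 with R = D·V reduced. Then for all 1 ≤ i, j ≤ N, the rank of D[≥i,≤j] equals the number of pivot pairs (a,b) of R with a ≥ i and b ≤ j. -/

import Mathlib

open Matrix


/-- `i` is the pivot of column `j` of `M`: the largest row index with a nonzero entry.
(Row/column `p : Fin N` corresponds to index `p+1 ∈ {1,…,N}` of the paper.) -/
def IsLow {N : ℕ} (M : Matrix (Fin N) (Fin N) (ZMod 2)) (i j : Fin N) : Prop :=
  M i j ≠ 0 ∧ ∀ i' : Fin N, M i' j ≠ 0 → i' ≤ i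

/-- A matrix is reduced if its nonzero columns have pairwise distinct pivots. -/
def IsReducedMat {N : ℕ} (M : Matrix (Fin N) (Fin N) (ZMod 2)) : Prop :=
  ∀ i j j' : Fin N, IsLow M i j → IsLow M i j' → j = j'

/-- `rankLL M a b` is the rank of the lower-left submatrix `M[≥ a, ≤ b]` formed by the
rows with (1-based) index `≥ a` and the columns with (1-based) index `≤ b`. -/
noncomputable def rankLL {N : ℕ} (M : Matrix (Fin N) (Fin N) (ZMod 2)) (a b : ℕ) : ℕ :=
  (Matrix.of fun (p : {p : Fin N // a ≤ (p : ℕ) + 1}) (q : {q : Fin N // (q : ℕ) + 1 ≤ b}) =>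
    M p.1 q.1).rank

/-- `V` is upper-triangular. -/
def UpperTri {N : ℕ} (V : Matrix (Fin N) (Fin N) (ZMod 2)) : Prop :=
  ∀ a b : Fin N, b < a → V a b = 0

/-- Any nonzero column has a pivot. -/
lemma exists_isLow {N : ℕ} (R : Matrix (Fin N) (Fin N) (ZMod 2)) (q : Fin N)
    (h : ∃ p, R p q ≠ 0) : ∃ a, IsLow R a q := by
  classical
  obtain ⟨p, hp⟩ := h
  have hne : (Finset.univ.filter fun p => R p q ≠ 0).Nonempty :=
    ⟨p, by simp [hp]⟩
  refine ⟨(Finset.univ.filter fun p => R p q ≠ 0).max' hne, ?_, ?_⟩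
  · have := (Finset.univ.filter fun p => R p q ≠ 0).max'_mem hne
    simpa using this
  · intro p' hp'
    exact Finset.le_max' _ p' (by simp [hp'])

lemma isLow_unique {N : ℕ} {R : Matrix (Fin N) (Fin N) (ZMod 2)} {a a' q : Fin N}
    (h : IsLow R a q) (h' : IsLow R a' q) : a = a' :=
  le_antisymm (h'.2 a h.1) (h.2 a' h'.1)

/-- A matrix over `ZMod 2` whose nonzero columns have pairwise distinct pivots has rank
equal to the number of nonzero columns. -/
lemma rank_eq_card_of_pivots {m n : Type*} [Fintype m] [Fintype n] [LinearOrder m]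
    (A : Matrix m n (ZMod 2)) (low : n → m)
    (hlow : ∀ q, Aᵀ q ≠ 0 → A (low q) q ≠ 0 ∧ ∀ p, A p q ≠ 0 → p ≤ low q)
    (hinj : ∀ q q', Aᵀ q ≠ 0 → Aᵀ q' ≠ 0 → low q = low q' → q = q') :
    A.rank = Nat.card {q : n // Aᵀ q ≠ 0} := by
  classical
  have hli : LinearIndependent (ZMod 2) (fun q : {q : n // Aᵀ q ≠ 0} => Aᵀ q.1) := by
    rw [Fintype.linearIndependent_iff]
    intro c hc
    by_contra hne
    push_neg at hne
    obtain ⟨q1, hq1⟩ := hne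
    set S : Finset {q : n // Aᵀ q ≠ 0} := Finset.univ.filter (fun q => c q ≠ 0) with hS
    have hSne : S.Nonempty := ⟨q1, by simp [hS, hq1]⟩
    obtain ⟨q₀, hq₀S, hq₀max⟩ := S.exists_max_image (fun q => low q.1) hSne
    have hq₀c : c q₀ ≠ 0 := by simpa [hS] using hq₀S
    have hr := congrFun hc (low q₀.1)
    simp only [Finset.sum_apply, Pi.smul_apply, smul_eq_mul, Pi.zero_apply] at hr
    have hsingle : ∑ q : {q : n // Aᵀ q ≠ 0}, c q * Aᵀ q.1 (low q₀.1)
        = c q₀ * Aᵀ q₀.1 (low q₀.1) := by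
      refine Finset.sum_eq_single q₀ (fun q _ hqne => ?_) (by simp)
      by_cases hcq : c q = 0
      · simp [hcq]
      · have hqS : q ∈ S := by simp [hS, hcq]
        have hle : low q.1 ≤ low q₀.1 := hq₀max q hqS
        have : A (low q₀.1) q.1 = 0 := by
          by_contra hA
          have hge : low q₀.1 ≤ low q.1 := (hlow q.1 q.2).2 _ hA
          have : q.1 = q₀.1 := hinj q.1 q₀.1 q.2 q₀.2 (le_antisymm hle hge)
          exact hqne (Subtype.ext this)
        simp [Matrix.transpose_apply, this]
    rw [hsingle] at hr
    exact (mul_ne_zero hq₀c (hlow q₀.1 q₀.2).1) hr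
  have hspan : Submodule.span (ZMod 2) (Set.range Aᵀ)
      = Submodule.span (ZMod 2) (Set.range fun q : {q : n // Aᵀ q ≠ 0} => Aᵀ q.1) := by
    apply le_antisymm
    · rw [Submodule.span_le]
      rintro _ ⟨q, rfl⟩
      by_cases h : Aᵀ q = 0
      · rw [h]; exact Submodule.zero_mem _
      · exact Submodule.subset_span ⟨⟨q, h⟩, rfl⟩
    · exact Submodule.span_mono (by rintro _ ⟨q, rfl⟩; exact ⟨q.1, rfl⟩)
  rw [Matrix.rank_eq_finrank_span_cols]
  change Module.finrank (ZMod 2) (Submodule.span (ZMod 2) (Set.range Aᵀ)) = _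
  rw [hspan, finrank_span_eq_card hli,
    Nat.card_eq_fintype_card]

/-- The rank of `D[≥ i, ≤ j]` equals the number of pivot pairs `(a,b)` of the reduced matrix
`R = D * V` with `a ≥ i` and `b ≤ j`. -/
theorem rank_lowerLeft_eq_card_pivotPairs {N : ℕ} (D V : Matrix (Fin N) (Fin N) (ZMod 2))
    (hV : IsUnit V) (hVt : UpperTri V) (hR : IsReducedMat (D * V)) :
    ∀ i j : Fin N,
      rankLL D ((i : ℕ) + 1) ((j : ℕ) + 1) =
        Nat.card {ab : Fin N × Fin N // IsLow (D * V) ab.1 ab.2 ∧ i ≤ ab.1 ∧ ab.2 ≤ j} := by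
  classical
  intro i j
  set R := D * V with hRdef
  -- diagonal entries of V are nonzero
  have hdetV : IsUnit V.det := (Matrix.isUnit_iff_isUnit_det V).mp hV
  have hVbt : V.BlockTriangular id := fun a b h => hVt a b h
  have hdiag : ∀ k : Fin N, V k k ≠ 0 := by
    intro k
    have hprod : V.det = ∏ k : Fin N, V k k := Matrix.det_of_upperTriangular hVbt
    have hne : (∏ k : Fin N, V k k) ≠ 0 := by
      rw [← hprod]; exact hdetV.ne_zero
    exact Finset.prod_ne_zero_iff.mp hne k (Finset.mem_univ k)
  -- the submatrices
  set ρ := {p : Fin N // (i : ℕ) + 1 ≤ (p : ℕ) + 1} with hρ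
  set κ := {q : Fin N // (q : ℕ) + 1 ≤ (j : ℕ) + 1} with hκ
  set A : Matrix ρ κ (ZMod 2) := Matrix.of fun p q => D p.1 q.1 with hA
  set V' : Matrix κ κ (ZMod 2) := Matrix.of fun k q => V k.1 q.1 with hV'
  set M : Matrix ρ κ (ZMod 2) := Matrix.of fun p q => R p.1 q.1 with hM
  -- step 1: M = A * V'
  have hfact : M = A * V' := by
    ext p q
    show R p.1 q.1 = ∑ k : κ, D p.1 k.1 * V k.1 q.1
    have h1 : R p.1 q.1 = ∑ k : Fin N, D p.1 k * V k q.1 := rfl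
    have h2 : ∑ k : Fin N, D p.1 k * V k q.1
        = ∑ k ∈ Finset.univ.filter (fun k : Fin N => (k : ℕ) + 1 ≤ (j : ℕ) + 1),
            D p.1 k * V k q.1 := by
      refine (Finset.sum_subset (Finset.filter_subset _ _) ?_).symm
      intro k _ hk
      have hk' : ¬ ((k : ℕ) + 1 ≤ (j : ℕ) + 1) := by simpa using hk
      have hjk : (j : ℕ) < (k : ℕ) := by omega
      have hqk : q.1 < k := by
        have hqj : (q.1 : ℕ) ≤ (j : ℕ) := by
          have := q.2; omega
        exact lt_of_le_of_lt (by exact hqj) hjk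
      rw [hVt k q.1 hqk, mul_zero]
    have h3 : ∑ k ∈ Finset.univ.filter (fun k : Fin N => (k : ℕ) + 1 ≤ (j : ℕ) + 1),
        D p.1 k * V k q.1 = ∑ k : κ, D p.1 k.1 * V k.1 q.1 := by
      refine Finset.sum_subtype _ (fun k => ?_) (fun k => D p.1 k * V k q.1)
      simp
    rw [h1, h2, h3]
  -- step 2: V' is invertible, so rank M = rank A
  have hV'bt : V'.BlockTriangular id := by
    intro a b hab
    exact hVt a.1 b.1 (by exact_mod_cast hab)
  have hdetV' : IsUnit V'.det := by
    rw [Matrix.det_of_upperTriangular hV'bt]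
    rw [isUnit_iff_ne_zero, Finset.prod_ne_zero_iff]
    intro k _
    exact hdiag k.1
  have hrank : rankLL D ((i : ℕ) + 1) ((j : ℕ) + 1) = M.rank := by
    show A.rank = M.rank
    rw [hfact, Matrix.rank_mul_eq_left_of_isUnit_det V' A hdetV']
  -- step 3: pivots of M
  have hcolM : ∀ q : κ, Mᵀ q ≠ 0 ↔ ∃ a : Fin N, IsLow R a q.1 ∧ i ≤ a := by
    intro q
    constructor
    · intro hq
      rw [Function.ne_iff] at hq
      obtain ⟨p, hp⟩ := hq
      have hp' : R p.1 q.1 ≠ 0 := hp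
      obtain ⟨a, ha⟩ := exists_isLow R q.1 ⟨p.1, hp'⟩
      refine ⟨a, ha, ?_⟩
      have h1 : p.1 ≤ a := ha.2 p.1 hp'
      have h2 : i ≤ p.1 := by
        have := p.2
        exact Fin.le_def.mpr (by omega)
      exact le_trans h2 h1
    · rintro ⟨a, ha, hia⟩
      have haρ : (i : ℕ) + 1 ≤ (a : ℕ) + 1 := by
        have := Fin.le_def.mp hia; omega
      intro h0
      exact ha.1 (by simpa [hM] using congrFun h0 ⟨a, haρ⟩)
  -- the pivot function
  have hpivot : ∀ q : κ, Mᵀ q ≠ 0 → ∃ a : ρ, IsLow R a.1 q.1 := by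
    intro q hq
    obtain ⟨a, ha, hia⟩ := (hcolM q).mp hq
    exact ⟨⟨a, by have := Fin.le_def.mp hia; omega⟩, ha⟩
  set low : κ → ρ := fun q =>
    if h : Mᵀ q ≠ 0 then (hpivot q h).choose else ⟨i, le_refl _⟩ with hlowdef
  have hlowspec : ∀ q : κ, Mᵀ q ≠ 0 → IsLow R (low q).1 q.1 := by
    intro q h
    simp only [hlowdef, dif_pos h]
    exact (hpivot q h).choose_spec
  have hrank2 : M.rank = Nat.card {q : κ // Mᵀ q ≠ 0} := by
    apply rank_eq_card_of_pivots M low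
    · intro q hq
      have hs := hlowspec q hq
      refine ⟨hs.1, fun p hp => ?_⟩
      have : p.1 ≤ (low q).1 := hs.2 p.1 hp
      exact Subtype.coe_le_coe.mp this
    · intro q q' hq hq' hl
      have hs := hlowspec q hq
      have hs' := hlowspec q' hq'
      rw [hl] at hs
      exact Subtype.ext (hR (low q').1 q.1 q'.1 hs hs')
  -- step 4: counting bijection
  have hcard : Nat.card {ab : Fin N × Fin N // IsLow R ab.1 ab.2 ∧ i ≤ ab.1 ∧ ab.2 ≤ j}
      = Nat.card {q : κ // Mᵀ q ≠ 0} := by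
    apply Nat.card_eq_of_bijective
      (f := fun x => ⟨⟨x.1.2, by have := Fin.le_def.mp x.2.2.2; omega⟩,
        (hcolM _).mpr ⟨x.1.1, x.2.1, x.2.2.1⟩⟩)
    constructor
    · rintro ⟨⟨a, b⟩, hab⟩ ⟨⟨a', b'⟩, hab'⟩ h
      have hbb : b = b' := congrArg (fun x => (x.1.1 : Fin N)) h
      subst hbb
      have haa : a = a' := isLow_unique hab.1 hab'.1
      simp [haa]
    · rintro ⟨q, hq⟩
      obtain ⟨a, ha, hia⟩ := (hcolM q).mp hq
      refine ⟨⟨(a, q.1), ha, hia,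
        show q.1 ≤ j from Fin.le_def.mpr (by have := q.2; omega)⟩,
        Subtype.ext (Subtype.ext rfl)⟩
  rw [hrank, hrank2, hcard]
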